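/- In the variational E-θ step, for any fixed distribution q_Z over Z_{1:t}, the minimizer q_θ* of the Kullback-Leibler divergence KL(q_θ × q_Z || p_{F_t}) over all distributions q_θ satisfies log q_θ*(θ_{1:t}) = Σ_{s=1}^t [log N(y_s | θ_s^T x_s, σ̄_s²) + log N(θ_s | θ_{s-1}, Q̄_{s-1})] + const, where σ̄_s^{-2} = Σ_k q_Z(Z_s=k) σ_k^{-2}, Q̄_{s-1}^{-1} = Σ_k q_Z(Z_{s-1}=k) Q_k^{-1}, θ_0 := θ̂_1 and Q̄_0 := P_1. -/

import Mathlib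

open Matrix

/-- Scalar Gaussian density `N(z | m, v)`. -/
noncomputable def gaussPdf (m v z : ℝ) : ℝ :=
  Real.exp (-(z - m) ^ 2 / (2 * v)) / Real.sqrt (2 * Real.pi * v)

/-- Multivariate Gaussian density `N(z | m, Q)` on `ℝ^d`. -/
noncomputable def mvGaussPdf {d : ℕ} (m : Fin d → ℝ) (Q : Matrix (Fin d) (Fin d) ℝ)
    (z : Fin d → ℝ) : ℝ :=
  Real.exp (-((z - m) ⬝ᵥ Q⁻¹.mulVec (z - m)) / 2) /
    Real.sqrt ((2 * Real.pi) ^ d * Q.det)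

/-- Index of a time `s` among `Fin T` (equal to `s` whenever `s < T`). -/
def tIdx {T : ℕ} (hT : 0 < T) (s : ℕ) : Fin T := ⟨s % T, Nat.mod_lt s hT⟩

/-- The joint posterior density of the switching state-space model over a
horizon `t = r + 1` (up to the normalizing constant). -/
noncomputable def switchJoint {d K r : ℕ}
    (π : Fin K → ℝ) (M : Fin K → Fin K → ℝ)
    (σ2 : Fin K → ℝ) (Q : Fin K → Matrix (Fin d) (Fin d) ℝ)
    (θhat1 : Fin d → ℝ) (P1 : Matrix (Fin d) (Fin d) ℝ)
    (x : ℕ → Fin d → ℝ) (y : ℕ → ℝ)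
    (z : Fin (r + 1) → Fin K) (θ : Fin (r + 1) → (Fin d → ℝ)) : ℝ :=
  π (z (tIdx r.succ_pos 0)) * mvGaussPdf θhat1 P1 (θ (tIdx r.succ_pos 0))
    * (∏ s ∈ Finset.range (r + 1),
        gaussPdf (θ (tIdx r.succ_pos s) ⬝ᵥ x s) (σ2 (z (tIdx r.succ_pos s))) (y s))
    * (∏ s ∈ Finset.range r,
        mvGaussPdf (θ (tIdx r.succ_pos s)) (Q (z (tIdx r.succ_pos s)))
            (θ (tIdx r.succ_pos (s + 1)))
          * M (z (tIdx r.succ_pos (s + 1))) (z (tIdx r.succ_pos s)))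

/- ### Auxiliary lemmas -/

lemma gaussPdf_pos {m v z : ℝ} (hv : 0 < v) : 0 < gaussPdf m v z :=
  div_pos (Real.exp_pos _) (Real.sqrt_pos.mpr (by positivity))

lemma log_gaussPdf {m v z : ℝ} (hv : 0 < v) :
    Real.log (gaussPdf m v z)
      = -(z - m) ^ 2 / (2 * v) - Real.log (Real.sqrt (2 * Real.pi * v)) := by
  have h2 : (0:ℝ) < 2 * Real.pi * v := by positivity
  rw [gaussPdf, Real.log_div (Real.exp_ne_zero _) (Real.sqrt_ne_zero'.mpr h2),
    Real.log_exp]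

lemma mvGaussPdf_pos {d : ℕ} {m z : Fin d → ℝ} {Q : Matrix (Fin d) (Fin d) ℝ}
    (hQ : 0 < Q.det) : 0 < mvGaussPdf m Q z := by
  have h2 : (0:ℝ) < (2 * Real.pi) ^ d * Q.det := by positivity
  exact div_pos (Real.exp_pos _) (Real.sqrt_pos.mpr h2)

lemma log_mvGaussPdf {d : ℕ} {m z : Fin d → ℝ} {Q : Matrix (Fin d) (Fin d) ℝ}
    (hQ : 0 < Q.det) :
    Real.log (mvGaussPdf m Q z)
      = -((z - m) ⬝ᵥ Q⁻¹.mulVec (z - m)) / 2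
        - Real.log (Real.sqrt ((2 * Real.pi) ^ d * Q.det)) := by
  have h2 : (0:ℝ) < (2 * Real.pi) ^ d * Q.det := by positivity
  rw [mvGaussPdf, Real.log_div (Real.exp_ne_zero _) (Real.sqrt_ne_zero'.mpr h2),
    Real.log_exp]

lemma sum_mulVec' {d K : ℕ} (s : Finset (Fin K)) (A : Fin K → Matrix (Fin d) (Fin d) ℝ)
    (w : Fin d → ℝ) : (∑ k ∈ s, A k).mulVec w = ∑ k ∈ s, (A k).mulVec w := by
  funext i
  simp only [Matrix.mulVec, dotProduct, Matrix.sum_apply, Finset.sum_apply,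
    Finset.sum_mul]
  exact Finset.sum_comm

lemma dotProduct_sum' {d K : ℕ} (s : Finset (Fin K)) (v : Fin K → (Fin d → ℝ))
    (w : Fin d → ℝ) : w ⬝ᵥ (∑ k ∈ s, v k) = ∑ k ∈ s, w ⬝ᵥ v k := by
  simp only [dotProduct, Finset.sum_apply, Finset.mul_sum]
  exact Finset.sum_comm

lemma dot_sum_smul_mulVec {d K : ℕ} (c : Fin K → ℝ)
    (A : Fin K → Matrix (Fin d) (Fin d) ℝ) (w : Fin d → ℝ) :
    w ⬝ᵥ (∑ k, c k • A k).mulVec w = ∑ k, c k * (w ⬝ᵥ (A k).mulVec w) := by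
  rw [sum_mulVec', dotProduct_sum']
  refine Finset.sum_congr rfl fun k _ => ?_
  rw [Matrix.smul_mulVec, dotProduct_smul, smul_eq_mul]

set_option maxHeartbeats 2000000 in
theorem vb_e_theta_step
    {d K r : ℕ} (hK : 0 < K)
    (π : Fin K → ℝ) (hπ : ∀ k, 0 < π k) (hπsum : ∑ k, π k = 1)
    (M : Fin K → Fin K → ℝ) (hM : ∀ i j, 0 < M i j) (hMsum : ∀ j, ∑ i, M i j = 1)
    (σ2 : Fin K → ℝ) (hσ : ∀ k, 0 < σ2 k)
    (Q : Fin K → Matrix (Fin d) (Fin d) ℝ) (hQ : ∀ k, (Q k).PosDef)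
    (θhat1 : Fin d → ℝ) (P1 : Matrix (Fin d) (Fin d) ℝ) (hP1 : P1.PosDef)
    (x : ℕ → Fin d → ℝ) (y : ℕ → ℝ)
    -- the fixed distribution q_Z over regime trajectories
    (qZ : (Fin (r + 1) → Fin K) → ℝ)
    (hqZ : ∀ z, 0 ≤ qZ z) (hqZsum : ∑ z, qZ z = 1)
    -- marginals of q_Z at each time
    (marg : ℕ → Fin K → ℝ)
    (hmarg : ∀ s k, marg s k =
      ∑ z ∈ Finset.univ.filter
        (fun z : Fin (r + 1) → Fin K => z (tIdx r.succ_pos s) = k), qZ z)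
    -- averaged observation variances and state covariances
    (σbar2 : ℕ → ℝ) (hσbar : ∀ s, σbar2 s = (∑ k, marg s k / σ2 k)⁻¹)
    (Qbar : ℕ → Matrix (Fin d) (Fin d) ℝ)
    (hQbar : ∀ s, Qbar s = (∑ k, marg s k • (Q k)⁻¹)⁻¹) :
    ∃ c : ℝ, ∀ θ : Fin (r + 1) → (Fin d → ℝ),
      -- log q_θ*(θ) up to an additive constant, i.e. E_{q_Z}[log p_{F_t}(θ, Z)]:
      ∑ z : Fin (r + 1) → Fin K,
          qZ z * Real.log (switchJoint π M σ2 Q θhat1 P1 x y z θ)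
        = Real.log (mvGaussPdf θhat1 P1 (θ (tIdx r.succ_pos 0)))
          + (∑ s ∈ Finset.range (r + 1),
              Real.log (gaussPdf (θ (tIdx r.succ_pos s) ⬝ᵥ x s) (σbar2 s) (y s)))
          + (∑ s ∈ Finset.range r,
              Real.log (mvGaussPdf (θ (tIdx r.succ_pos s)) (Qbar s)
                (θ (tIdx r.succ_pos (s + 1)))))
          + c := by
  classical
  set I : ℕ → Fin (r + 1) := tIdx r.succ_pos with hIdef
  -- basic properties of the marginals
  have hmargsum : ∀ s : ℕ, ∑ k, marg s k = 1 := by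
    intro s
    calc ∑ k, marg s k
        = ∑ k, ∑ z ∈ Finset.univ.filter
            (fun z : Fin (r + 1) → Fin K => z (I s) = k), qZ z := by
          exact Finset.sum_congr rfl fun k _ => hmarg s k
      _ = ∑ z, qZ z := Finset.sum_fiberwise _ _ _
      _ = 1 := hqZsum
  have hmargnn : ∀ s k, 0 ≤ marg s k := by
    intro s k
    rw [hmarg s k]
    exact Finset.sum_nonneg fun z _ => hqZ z
  have hfib : ∀ (s : ℕ) (g : Fin K → ℝ),
      ∑ z : Fin (r + 1) → Fin K, qZ z * g (z (I s)) = ∑ k, marg s k * g k := by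
    intro s g
    rw [← Finset.sum_fiberwise Finset.univ (fun z : Fin (r + 1) → Fin K => z (I s))
      (fun z => qZ z * g (z (I s)))]
    refine Finset.sum_congr rfl fun k _ => ?_
    rw [hmarg s k, Finset.sum_mul]
    refine Finset.sum_congr rfl fun z hz => ?_
    rw [(Finset.mem_filter.1 hz).2]
  have hexistsk : ∀ s : ℕ, ∃ k, 0 < marg s k := by
    intro s
    by_contra h
    push_neg at h
    have h0 : ∑ k, marg s k ≤ 0 := Finset.sum_nonpos fun k _ => h k
    rw [hmargsum s] at h0
    linarith
  -- the averaged observation variance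
  have hsσpos : ∀ s : ℕ, 0 < ∑ k, marg s k / σ2 k := by
    intro s
    obtain ⟨k, hk⟩ := hexistsk s
    exact Finset.sum_pos' (fun j _ => div_nonneg (hmargnn s j) (hσ j).le)
      ⟨k, Finset.mem_univ k, div_pos hk (hσ k)⟩
  have hσbarpos : ∀ s, 0 < σbar2 s := by
    intro s; rw [hσbar s]; exact inv_pos.2 (hsσpos s)
  have hσbarinv : ∀ s, (σbar2 s)⁻¹ = ∑ k, marg s k / σ2 k := by
    intro s; rw [hσbar s, inv_inv]
  -- the averaged state precision, its positive definiteness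
  have hSpos : ∀ s : ℕ, (∑ k, marg s k • (Q k)⁻¹).PosDef := by
    intro s
    obtain ⟨k0, hk0⟩ := hexistsk s
    refine Matrix.posDef_iff_dotProduct_mulVec.mpr ⟨?_, ?_⟩
    · show _ = _
      rw [Matrix.conjTranspose_sum]
      refine Finset.sum_congr rfl fun k _ => ?_
      rw [Matrix.conjTranspose_smul, star_trivial, (hQ k).inv.isHermitian.eq]
    · intro v hv
      have hstar : star v = v := by
        funext i; simp
      rw [hstar, dot_sum_smul_mulVec]
      refine Finset.sum_pos' (fun j _ => ?_) ⟨k0, Finset.mem_univ k0, ?_⟩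
      · have := (hQ j).inv.posSemidef.dotProduct_mulVec_nonneg v
        rw [hstar] at this
        exact mul_nonneg (hmargnn s j) this
      · have := (hQ k0).inv.dotProduct_mulVec_pos hv
        rw [hstar] at this
        exact mul_pos hk0 this
  have hQbarPD : ∀ s, (Qbar s).PosDef := by
    intro s; rw [hQbar s]; exact (hSpos s).inv
  have hQbarinv : ∀ s, (Qbar s)⁻¹ = ∑ k, marg s k • (Q k)⁻¹ := by
    intro s
    rw [hQbar s, Matrix.nonsing_inv_nonsing_inv _ (hSpos s).det_pos.ne'.isUnit]
  -- constants
  set C1 : ℕ → ℝ := fun s =>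
    Real.log (Real.sqrt (2 * Real.pi * σbar2 s))
      - ∑ k, marg s k * Real.log (Real.sqrt (2 * Real.pi * σ2 k)) with hC1def
  set C2 : ℕ → ℝ := fun s =>
    Real.log (Real.sqrt ((2 * Real.pi) ^ d * (Qbar s).det))
      - ∑ k, marg s k * Real.log (Real.sqrt ((2 * Real.pi) ^ d * (Q k).det)) with hC2def
  -- averaging of the observation terms
  have hobs : ∀ (s : ℕ) (m : ℝ),
      ∑ z : Fin (r + 1) → Fin K, qZ z * Real.log (gaussPdf m (σ2 (z (I s))) (y s))
        = Real.log (gaussPdf m (σbar2 s) (y s)) + C1 s := by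
    intro s m
    rw [hfib s (fun k => Real.log (gaussPdf m (σ2 k) (y s)))]
    have step : ∀ k : Fin K, marg s k * Real.log (gaussPdf m (σ2 k) (y s))
        = -(y s - m) ^ 2 / 2 * (marg s k / σ2 k)
          - marg s k * Real.log (Real.sqrt (2 * Real.pi * σ2 k)) := by
      intro k
      rw [log_gaussPdf (hσ k)]
      have hk : σ2 k ≠ 0 := (hσ k).ne'
      field_simp
    calc ∑ k, marg s k * Real.log (gaussPdf m (σ2 k) (y s))
        = ∑ k, (-(y s - m) ^ 2 / 2 * (marg s k / σ2 k)
            - marg s k * Real.log (Real.sqrt (2 * Real.pi * σ2 k))) :=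
          Finset.sum_congr rfl fun k _ => step k
      _ = -(y s - m) ^ 2 / 2 * (∑ k, marg s k / σ2 k)
            - ∑ k, marg s k * Real.log (Real.sqrt (2 * Real.pi * σ2 k)) := by
          rw [Finset.sum_sub_distrib, Finset.mul_sum]
      _ = -(y s - m) ^ 2 / 2 * (σbar2 s)⁻¹
            - ∑ k, marg s k * Real.log (Real.sqrt (2 * Real.pi * σ2 k)) := by
          rw [hσbarinv s]
      _ = Real.log (gaussPdf m (σbar2 s) (y s)) + C1 s := by
          rw [log_gaussPdf (hσbarpos s), hC1def]
          have hs : σbar2 s ≠ 0 := (hσbarpos s).ne'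
          field_simp
          ring
  -- averaging of the transition terms
  have htrans : ∀ (s : ℕ) (u v : Fin d → ℝ),
      ∑ z : Fin (r + 1) → Fin K, qZ z * Real.log (mvGaussPdf u (Q (z (I s))) v)
        = Real.log (mvGaussPdf u (Qbar s) v) + C2 s := by
    intro s u v
    rw [hfib s (fun k => Real.log (mvGaussPdf u (Q k) v))]
    have step : ∀ k : Fin K, marg s k * Real.log (mvGaussPdf u (Q k) v)
        = -(marg s k * ((v - u) ⬝ᵥ (Q k)⁻¹.mulVec (v - u))) / 2
          - marg s k * Real.log (Real.sqrt ((2 * Real.pi) ^ d * (Q k).det)) := by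
      intro k
      rw [log_mvGaussPdf (hQ k).det_pos]
      ring
    calc ∑ k, marg s k * Real.log (mvGaussPdf u (Q k) v)
        = ∑ k, (-(marg s k * ((v - u) ⬝ᵥ (Q k)⁻¹.mulVec (v - u))) / 2
            - marg s k * Real.log (Real.sqrt ((2 * Real.pi) ^ d * (Q k).det))) :=
          Finset.sum_congr rfl fun k _ => step k
      _ = -((v - u) ⬝ᵥ (Qbar s)⁻¹.mulVec (v - u)) / 2
            - ∑ k, marg s k * Real.log (Real.sqrt ((2 * Real.pi) ^ d * (Q k).det)) := by
          rw [Finset.sum_sub_distrib]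
          congr 1
          rw [hQbarinv s, dot_sum_smul_mulVec, ← Finset.sum_div, ← Finset.sum_neg_distrib]
      _ = Real.log (mvGaussPdf u (Qbar s) v) + C2 s := by
          rw [log_mvGaussPdf (hQbarPD s).det_pos, hC2def]
          ring
  -- the constant
  refine ⟨(∑ z : Fin (r + 1) → Fin K, qZ z * Real.log (π (z (I 0))))
    + (∑ z : Fin (r + 1) → Fin K,
        qZ z * ∑ s ∈ Finset.range r, Real.log (M (z (I (s + 1))) (z (I s))))
    + (∑ s ∈ Finset.range (r + 1), C1 s) + (∑ s ∈ Finset.range r, C2 s), ?_⟩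
  intro θ
  -- expand the log of the joint density
  have hlog : ∀ z : Fin (r + 1) → Fin K,
      Real.log (switchJoint π M σ2 Q θhat1 P1 x y z θ)
        = Real.log (π (z (I 0)))
          + Real.log (mvGaussPdf θhat1 P1 (θ (I 0)))
          + (∑ s ∈ Finset.range (r + 1),
              Real.log (gaussPdf (θ (I s) ⬝ᵥ x s) (σ2 (z (I s))) (y s)))
          + ((∑ s ∈ Finset.range r,
              Real.log (mvGaussPdf (θ (I s)) (Q (z (I s))) (θ (I (s + 1)))))
            + (∑ s ∈ Finset.range r, Real.log (M (z (I (s + 1))) (z (I s))))) := by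
    intro z
    have hπne : π (z (I 0)) ≠ 0 := (hπ _).ne'
    have hmvne : mvGaussPdf θhat1 P1 (θ (I 0)) ≠ 0 := (mvGaussPdf_pos hP1.det_pos).ne'
    have hgne : ∀ s ∈ Finset.range (r + 1),
        gaussPdf (θ (I s) ⬝ᵥ x s) (σ2 (z (I s))) (y s) ≠ 0 :=
      fun s _ => (gaussPdf_pos (hσ _)).ne'
    have htne : ∀ s ∈ Finset.range r,
        mvGaussPdf (θ (I s)) (Q (z (I s))) (θ (I (s + 1)))
          * M (z (I (s + 1))) (z (I s)) ≠ 0 :=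
      fun s _ => (mul_pos (mvGaussPdf_pos (hQ _).det_pos) (hM _ _)).ne'
    simp only [switchJoint, ← hIdef]
    rw [Real.log_mul (mul_ne_zero (mul_ne_zero hπne hmvne)
        (Finset.prod_ne_zero_iff.2 hgne)) (Finset.prod_ne_zero_iff.2 htne),
      Real.log_mul (mul_ne_zero hπne hmvne) (Finset.prod_ne_zero_iff.2 hgne),
      Real.log_mul hπne hmvne, Real.log_prod hgne, Real.log_prod htne]
    congr 1
    rw [← Finset.sum_add_distrib]
    refine Finset.sum_congr rfl fun s _ => ?_
    rw [Real.log_mul (mvGaussPdf_pos (hQ _).det_pos).ne' (hM _ _).ne']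
  -- assemble
  calc ∑ z : Fin (r + 1) → Fin K,
        qZ z * Real.log (switchJoint π M σ2 Q θhat1 P1 x y z θ)
      = (∑ z : Fin (r + 1) → Fin K, qZ z * Real.log (π (z (I 0))))
        + (∑ z : Fin (r + 1) → Fin K, qZ z) * Real.log (mvGaussPdf θhat1 P1 (θ (I 0)))
        + (∑ s ∈ Finset.range (r + 1), ∑ z : Fin (r + 1) → Fin K,
            qZ z * Real.log (gaussPdf (θ (I s) ⬝ᵥ x s) (σ2 (z (I s))) (y s)))
        + ((∑ s ∈ Finset.range r, ∑ z : Fin (r + 1) → Fin K,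
            qZ z * Real.log (mvGaussPdf (θ (I s)) (Q (z (I s))) (θ (I (s + 1)))))
          + (∑ z : Fin (r + 1) → Fin K,
              qZ z * ∑ s ∈ Finset.range r, Real.log (M (z (I (s + 1))) (z (I s))))) := by
        simp only [hlog, mul_add]
        rw [Finset.sum_add_distrib, Finset.sum_add_distrib, Finset.sum_add_distrib]
        congr 1
        · congr 1
          · congr 1
            exact (Finset.sum_mul _ _ _).symm
          · simp only [Finset.mul_sum]
            exact Finset.sum_comm
        · rw [Finset.sum_add_distrib]
          congr 1
          simp only [Finset.mul_sum]
          exact Finset.sum_comm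
    _ = Real.log (mvGaussPdf θhat1 P1 (θ (tIdx r.succ_pos 0)))
          + (∑ s ∈ Finset.range (r + 1),
              Real.log (gaussPdf (θ (tIdx r.succ_pos s) ⬝ᵥ x s) (σbar2 s) (y s)))
          + (∑ s ∈ Finset.range r,
              Real.log (mvGaussPdf (θ (tIdx r.succ_pos s)) (Qbar s)
                (θ (tIdx r.succ_pos (s + 1)))))
          + ((∑ z : Fin (r + 1) → Fin K, qZ z * Real.log (π (z (I 0))))
            + (∑ z : Fin (r + 1) → Fin K,
                qZ z * ∑ s ∈ Finset.range r, Real.log (M (z (I (s + 1))) (z (I s))))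
            + (∑ s ∈ Finset.range (r + 1), C1 s) + (∑ s ∈ Finset.range r, C2 s)) := by
        rw [hqZsum, one_mul]
        have h1 : ∀ s ∈ Finset.range (r + 1),
            ∑ z : Fin (r + 1) → Fin K,
              qZ z * Real.log (gaussPdf (θ (I s) ⬝ᵥ x s) (σ2 (z (I s))) (y s))
            = Real.log (gaussPdf (θ (I s) ⬝ᵥ x s) (σbar2 s) (y s)) + C1 s :=
          fun s _ => hobs s _
        have h2 : ∀ s ∈ Finset.range r,
            ∑ z : Fin (r + 1) → Fin K,
              qZ z * Real.log (mvGaussPdf (θ (I s)) (Q (z (I s))) (θ (I (s + 1))))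
            = Real.log (mvGaussPdf (θ (I s)) (Qbar s) (θ (I (s + 1)))) + C2 s :=
          fun s _ => htrans s _ _
        rw [Finset.sum_congr rfl h1, Finset.sum_congr rfl h2,
          Finset.sum_add_distrib, Finset.sum_add_distrib]
        ring
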